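/- For the 2ODE y'' = (y'-1)(x⁴y' + 2x³y - x²y + y')/((x²y - 1)x²), the rational function σ(x,y,z) = -x²(z-1)/(x²y - 1) satisfies the determining equation D(σ) = σ² + (∂_zφ)·σ - ∂_yφ, where φ(x,y,z) = (z-1)(x⁴z + 2x³y - x²y + z)/((x²y-1)x²). -/

import Mathlib

noncomputable def pdx (F : ℝ × ℝ × ℝ → ℝ) (p : ℝ × ℝ × ℝ) : ℝ :=
  deriv (fun t => F (t, p.2.1, p.2.2)) p.1

noncomputable def pdy (F : ℝ × ℝ × ℝ → ℝ) (p : ℝ × ℝ × ℝ) : ℝ :=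
  deriv (fun t => F (p.1, t, p.2.2)) p.2.1

noncomputable def pdz (F : ℝ × ℝ × ℝ → ℝ) (p : ℝ × ℝ × ℝ) : ℝ :=
  deriv (fun t => F (p.1, p.2.1, t)) p.2.2

/-- The Cartan vector field `D = ∂ₓ + z ∂_y + φ ∂_z` of `y'' = φ(x,y,y')`. -/
noncomputable def Dtot (φ F : ℝ × ℝ × ℝ → ℝ) (p : ℝ × ℝ × ℝ) : ℝ :=
  pdx F p + p.2.2 * pdy F p + φ p * pdz F p

/-- Evaluation of a polynomial in three variables at a point of ℝ³. -/
noncomputable def mev (P : MvPolynomial (Fin 3) ℝ) (p : ℝ × ℝ × ℝ) : ℝ :=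
  MvPolynomial.eval ![p.1, p.2.1, p.2.2] P

noncomputable def phi12 (p : ℝ × ℝ × ℝ) : ℝ :=
  (p.2.2 - 1) * (p.1 ^ 4 * p.2.2 + 2 * p.1 ^ 3 * p.2.1 - p.1 ^ 2 * p.2.1 + p.2.2)
    / ((p.1 ^ 2 * p.2.1 - 1) * p.1 ^ 2)

noncomputable def sigma12 (p : ℝ × ℝ × ℝ) : ℝ :=
  -(p.1 ^ 2 * (p.2.2 - 1)) / (p.1 ^ 2 * p.2.1 - 1)

/-- The rational function σ = -x²(z-1)/(x²y-1) satisfies the determining equation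
for the 2ODE y'' = (y'-1)(x⁴y' + 2x³y - x²y + y')/((x²y-1)x²). -/
theorem sigma12_determining :
    ∀ p : ℝ × ℝ × ℝ, p.1 ≠ 0 → p.1 ^ 2 * p.2.1 ≠ 1 →
      Dtot phi12 sigma12 p =
        sigma12 p ^ 2 + pdz phi12 p * sigma12 p - pdy phi12 p := by
  rintro ⟨x, y, z⟩ hx h1
  simp only at hx h1
  have hx2 : x ^ 2 ≠ 0 := pow_ne_zero _ hx
  have hd : x ^ 2 * y - 1 ≠ 0 := sub_ne_zero.2 h1
  have hD : (x ^ 2 * y - 1) * x ^ 2 ≠ 0 := mul_ne_zero hd hx2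
  -- ∂ₓ σ
  have hσx : pdx sigma12 (x, y, z)
      = (-(2 * x * (z - 1)) * (x ^ 2 * y - 1) - -(x ^ 2 * (z - 1)) * (2 * x * y))
        / (x ^ 2 * y - 1) ^ 2 := by
    have hN : HasDerivAt (fun t : ℝ => -(t ^ 2 * (z - 1))) (-(2 * x * (z - 1))) x := by
      exact ((hasDerivAt_pow 2 x).mul_const (z - 1)).neg.congr_deriv (by simp)
    have hDen : HasDerivAt (fun t : ℝ => t ^ 2 * y - 1) (2 * x * y) x := by
      simpa using ((hasDerivAt_pow 2 x).mul_const y).sub_const 1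
    exact (hN.div hDen hd).deriv
  -- ∂_y σ
  have hσy : pdy sigma12 (x, y, z)
      = (0 * (x ^ 2 * y - 1) - -(x ^ 2 * (z - 1)) * x ^ 2) / (x ^ 2 * y - 1) ^ 2 := by
    have hN : HasDerivAt (fun _ : ℝ => -(x ^ 2 * (z - 1))) 0 y := hasDerivAt_const _ _
    have hDen : HasDerivAt (fun t : ℝ => x ^ 2 * t - 1) (x ^ 2) y := by
      simpa using ((hasDerivAt_id y).const_mul (x ^ 2)).sub_const 1
    exact (hN.div hDen hd).deriv
  -- ∂_z σ
  have hσz : pdz sigma12 (x, y, z) = -(x ^ 2) / (x ^ 2 * y - 1) := by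
    have hN : HasDerivAt (fun t : ℝ => -(x ^ 2 * (t - 1))) (-(x ^ 2)) z := by
      exact (((hasDerivAt_id z).sub_const 1).const_mul (x ^ 2)).neg.congr_deriv (by simp)
    exact (hN.div_const (x ^ 2 * y - 1)).deriv
  -- ∂_y φ
  have hφy : pdy phi12 (x, y, z)
      = (((z - 1) * (2 * x ^ 3 - x ^ 2)) * ((x ^ 2 * y - 1) * x ^ 2)
          - (z - 1) * (x ^ 4 * z + 2 * x ^ 3 * y - x ^ 2 * y + z) * (x ^ 2 * x ^ 2))
        / ((x ^ 2 * y - 1) * x ^ 2) ^ 2 := by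
    have hN : HasDerivAt
        (fun t : ℝ => (z - 1) * (x ^ 4 * z + 2 * x ^ 3 * t - x ^ 2 * t + z))
        ((z - 1) * (2 * x ^ 3 - x ^ 2)) y := by
      have h : HasDerivAt (fun t : ℝ => x ^ 4 * z + 2 * x ^ 3 * t - x ^ 2 * t + z)
          (2 * x ^ 3 - x ^ 2) y := by
        simpa using ((((hasDerivAt_id y).const_mul (2 * x ^ 3)).const_add
          (x ^ 4 * z)).sub ((hasDerivAt_id y).const_mul (x ^ 2))).add_const z
      exact h.const_mul _
    have hDen : HasDerivAt (fun t : ℝ => (x ^ 2 * t - 1) * x ^ 2) (x ^ 2 * x ^ 2) y := by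
      simpa using (((hasDerivAt_id y).const_mul (x ^ 2)).sub_const 1).mul_const (x ^ 2)
    exact (hN.div hDen hD).deriv
  -- ∂_z φ
  have hφz : pdz phi12 (x, y, z)
      = ((x ^ 4 * z + 2 * x ^ 3 * y - x ^ 2 * y + z) + (z - 1) * (x ^ 4 + 1))
        / ((x ^ 2 * y - 1) * x ^ 2) := by
    have hN : HasDerivAt
        (fun t : ℝ => (t - 1) * (x ^ 4 * t + 2 * x ^ 3 * y - x ^ 2 * y + t))
        (1 * (x ^ 4 * z + 2 * x ^ 3 * y - x ^ 2 * y + z) + (z - 1) * (x ^ 4 + 1)) z := by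
      have h1' : HasDerivAt (fun t : ℝ => t - 1) 1 z := (hasDerivAt_id z).sub_const 1
      have h2 : HasDerivAt (fun t : ℝ => x ^ 4 * t + 2 * x ^ 3 * y - x ^ 2 * y + t)
          (x ^ 4 + 1) z := by
        exact (((((hasDerivAt_id z).const_mul (x ^ 4)).add_const
          (2 * x ^ 3 * y)).sub_const (x ^ 2 * y)).add (hasDerivAt_id z)).congr_deriv (by simp)
      exact h1'.mul h2
    have := (hN.div_const ((x ^ 2 * y - 1) * x ^ 2)).deriv
    rw [pdz]
    simp only [phi12]
    rw [this]
    ring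
  -- ∂ₓ φ (needed for Dtot? no: Dtot applies D to σ, uses φ value only)
  have hφ : phi12 (x, y, z)
      = (z - 1) * (x ^ 4 * z + 2 * x ^ 3 * y - x ^ 2 * y + z)
        / ((x ^ 2 * y - 1) * x ^ 2) := rfl
  have hσ : sigma12 (x, y, z) = -(x ^ 2 * (z - 1)) / (x ^ 2 * y - 1) := rfl
  rw [Dtot, hσx, hσy, hσz, hφy, hφz, hφ, hσ]
  simp only
  field_simp
  ring
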